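/- The guessing probability of the full string is exactly 1/d: for the uniform ensemble of the d² pure states |Ψ_{y₀y₁}⟩ = X^{y₀}Z^{y₁}|Ψ⟩ each with probability 1/d², the maximum over all POVMs {M_{y₀y₁}} of (1/d²)∑_{y₀,y₁} ⟨Ψ_{y₀y₁}| M_{y₀y₁} |Ψ_{y₀y₁}⟩ equals 1/d. -/

import Mathlib

open Matrix Complex Finset
open scoped ComplexOrder

noncomputable section

def ω (d : ℕ) : ℂ := Complex.exp (2 * ↑Real.pi * Complex.I / (d : ℂ))

def Xp (d : ℕ) : Matrix (Fin d) (Fin d) ℂ :=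
  Matrix.of fun j k => if (j : ℕ) = ((k : ℕ) + 1) % d then 1 else 0

def Zp (d : ℕ) : Matrix (Fin d) (Fin d) ℂ :=
  Matrix.diagonal fun j => ω d ^ (j : ℕ)

def Fm (d : ℕ) : Matrix (Fin d) (Fin d) ℂ :=
  Matrix.of fun j k => ω d ^ ((j : ℕ) * (k : ℕ)) / ((Real.sqrt d : ℝ) : ℂ)

def ket (d : ℕ) (y : Fin d) : Fin d → ℂ := fun j => if j = y then 1 else 0

def e0 (d : ℕ) : Fin d → ℂ := fun j => if (j : ℕ) = 0 then 1 else 0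

def Psi (d : ℕ) : Fin d → ℂ :=
  (((Real.sqrt (2 * (1 + 1 / Real.sqrt d)) : ℝ) : ℂ))⁻¹ •
    (e0 d + (Fm d).mulVec (e0 d))

def dotc {d : ℕ} (v w : Fin d → ℂ) : ℂ := ∑ j, (starRingEnd ℂ) (v j) * w j

def outer {d : ℕ} (v : Fin d → ℂ) : Matrix (Fin d) (Fin d) ℂ :=
  Matrix.of fun i j => v i * (starRingEnd ℂ) (v j)

def enc (d : ℕ) (y₀ y₁ : Fin d) : Fin d → ℂ :=
  ((Xp d ^ (y₀ : ℕ)) * (Zp d ^ (y₁ : ℕ))).mulVec (Psi d)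

namespace Stmt7Aux

open Fin.NatCast

variable {d : ℕ}

lemma omega_prim (hd : d ≠ 0) : IsPrimitiveRoot (ω d) d := by
  simpa [ω] using Complex.isPrimitiveRoot_exp d hd

lemma omega_ne_zero : ω d ≠ 0 := Complex.exp_ne_zero _

lemma conj_omega : (starRingEnd ℂ) (ω d) = (ω d)⁻¹ := by
  rw [ω, ← Complex.exp_conj, ← Complex.exp_neg]
  congr 1
  simp only [map_div₀, _root_.map_mul, Complex.conj_I, Complex.conj_ofReal, map_ofNat,
    Complex.conj_natCast]
  ring

lemma conj_omega_pow (n : ℕ) : (starRingEnd ℂ) (ω d ^ n) = (ω d ^ n)⁻¹ := by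
  rw [map_pow, conj_omega, inv_pow]

lemma conj_mul_self_omega_pow (n : ℕ) : (starRingEnd ℂ) (ω d ^ n) * ω d ^ n = 1 := by
  rw [conj_omega_pow]
  exact inv_mul_cancel₀ (pow_ne_zero _ omega_ne_zero)

lemma gsum (hd : d ≠ 0) (m : ℕ) :
    ∑ b : Fin d, (ω d ^ m) ^ (b : ℕ) = if d ∣ m then (d : ℂ) else 0 := by
  have hprim := omega_prim hd
  rw [Fin.sum_univ_eq_sum_range (fun b => (ω d ^ m) ^ b)]
  by_cases h : d ∣ m
  · rw [if_pos h]
    have h1 : ω d ^ m = 1 := (hprim.pow_eq_one_iff_dvd m).2 h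
    simp [h1]
  · rw [if_neg h]
    have h1 : ω d ^ m ≠ 1 := fun hh => h ((hprim.pow_eq_one_iff_dvd m).1 hh)
    rw [geom_sum_eq h1]
    have h2 : (ω d ^ m) ^ d = 1 := by
      rw [← pow_mul, mul_comm, pow_mul, hprim.pow_eq_one, one_pow]
    simp [h2]

lemma dvd_iff (hd2 : 2 ≤ d) {k l : ℕ} (hk : k < d) (hl : l < d) :
    d ∣ (k + l * (d - 1)) ↔ k = l := by
  haveI : NeZero d := ⟨by omega⟩
  rw [← ZMod.natCast_eq_zero_iff]
  have hcast : ((k + l * (d - 1) : ℕ) : ZMod d) = (k : ZMod d) - (l : ZMod d) := by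
    push_cast [Nat.cast_sub (by omega : 1 ≤ d)]
    rw [ZMod.natCast_self]
    ring
  rw [hcast, sub_eq_zero, ZMod.natCast_eq_natCast_iff]
  constructor
  · intro h
    have h' : k % d = l % d := h
    rwa [Nat.mod_eq_of_lt hk, Nat.mod_eq_of_lt hl] at h'
  · intro h; rw [h]

lemma roots_sum (hd2 : 2 ≤ d) (k l : Fin d) :
    ∑ b : Fin d, ω d ^ ((b : ℕ) * (k : ℕ)) * (starRingEnd ℂ) (ω d ^ ((b : ℕ) * (l : ℕ)))
      = if k = l then (d : ℂ) else 0 := by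
  have hinv : (ω d)⁻¹ = ω d ^ (d - 1) := by
    refine inv_eq_of_mul_eq_one_right ?_
    rw [← pow_succ']
    have h1 : d - 1 + 1 = d := by omega
    rw [h1, (omega_prim (by omega)).pow_eq_one]
  have hterm : ∀ b : Fin d,
      ω d ^ ((b : ℕ) * (k : ℕ)) * (starRingEnd ℂ) (ω d ^ ((b : ℕ) * (l : ℕ)))
        = (ω d ^ ((k : ℕ) + (l : ℕ) * (d - 1))) ^ (b : ℕ) := by
    intro b
    rw [conj_omega_pow, ← inv_pow, hinv, ← pow_mul, ← pow_mul, ← pow_add]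
    congr 1
    ring
  rw [Finset.sum_congr rfl fun b _ => hterm b, gsum (by omega)]
  exact if_congr ((dvd_iff hd2 k.isLt l.isLt).trans Fin.val_inj) rfl rfl

variable [NeZero d]

lemma Xp_apply (hd2 : 2 ≤ d) (j k : Fin d) :
    Xp d j k = if j = k + 1 then 1 else 0 := by
  have h1 : ((1 : Fin d) : ℕ) = 1 := by
    rw [Fin.val_one']
    exact Nat.mod_eq_of_lt (by omega)
  have h2 : ((j : ℕ) = ((k : ℕ) + 1) % d) ↔ j = k + 1 := by
    rw [Fin.ext_iff, Fin.val_add, h1]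
  show (if (j : ℕ) = ((k : ℕ) + 1) % d then (1 : ℂ) else 0) = _
  exact if_congr h2 rfl rfl

lemma Xpow_apply (hd2 : 2 ≤ d) (a : ℕ) (j k : Fin d) :
    (Xp d ^ a) j k = if j = k + (a : Fin d) then 1 else 0 := by
  induction a generalizing j k with
  | zero => simp [Matrix.one_apply]
  | succ a ih =>
    rw [pow_succ, Matrix.mul_apply]
    rw [Finset.sum_eq_single (k + 1)]
    · rw [ih, Xp_apply hd2, if_pos rfl, mul_one]
      have : k + 1 + (a : Fin d) = k + ((a : ℕ) + 1 : ℕ) := by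
        push_cast
        abel
      rw [this]
    · intro m _ hm
      rw [Xp_apply hd2, if_neg hm, mul_zero]
    · intro h; exact absurd (Finset.mem_univ _) h

lemma Zpow_apply (b : ℕ) :
    Zp d ^ b = Matrix.diagonal fun j : Fin d => ω d ^ (b * (j : ℕ)) := by
  rw [show Zp d = Matrix.diagonal (fun j : Fin d => ω d ^ (j : ℕ)) from rfl,
    Matrix.diagonal_pow]
  have hfun : ((fun j : Fin d => ω d ^ (j : ℕ)) ^ b) = fun j : Fin d => ω d ^ (b * (j : ℕ)) := by
    funext j
    rw [Pi.pow_apply, ← pow_mul, mul_comm]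
  rw [hfun]

lemma U_apply (hd2 : 2 ≤ d) (a b : ℕ) (j k : Fin d) :
    (Xp d ^ a * Zp d ^ b) j k
      = if j = k + (a : Fin d) then ω d ^ (b * (k : ℕ)) else 0 := by
  rw [Zpow_apply, Matrix.mul_diagonal, Xpow_apply hd2]
  split <;> simp

lemma U_unitary (hd2 : 2 ≤ d) (a b : ℕ) :
    (Xp d ^ a * Zp d ^ b)ᴴ * (Xp d ^ a * Zp d ^ b) = 1 := by
  ext k l
  rw [Matrix.mul_apply]
  rw [Finset.sum_eq_single (k + (a : Fin d))]
  · rw [Matrix.conjTranspose_apply, U_apply hd2, U_apply hd2, if_pos rfl]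
    by_cases hkl : k = l
    · subst hkl
      rw [if_pos rfl, Matrix.one_apply_eq]
      exact conj_mul_self_omega_pow _
    · have : ¬(k + (a : Fin d) = l + (a : Fin d)) := fun h => hkl (add_right_cancel h)
      rw [if_neg this, mul_zero, Matrix.one_apply_ne hkl]
  · intro m _ hm
    rw [Matrix.conjTranspose_apply, U_apply hd2, if_neg hm, star_zero, zero_mul]
  · intro h; exact absurd (Finset.mem_univ _) h

lemma dotc_eq (v w : Fin d → ℂ) : dotc v w = star v ⬝ᵥ w := rfl

lemma dotc_mulVec_unitary {M : Matrix (Fin d) (Fin d) ℂ} (hM : Mᴴ * M = 1)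
    (v : Fin d → ℂ) : dotc (M.mulVec v) (M.mulVec v) = dotc v v := by
  rw [dotc_eq, dotc_eq, star_mulVec, ← Matrix.dotProduct_mulVec,
    Matrix.mulVec_mulVec, hM, Matrix.one_mulVec]

lemma outer_conj_eq (M : Matrix (Fin d) (Fin d) ℂ) (v : Fin d → ℂ) :
    outer (M.mulVec v) = M * outer v * Mᴴ := by
  ext i j
  simp only [outer, Matrix.of_apply, Matrix.mul_apply, Matrix.mulVec,
    Matrix.conjTranspose_apply, dotProduct, map_sum, _root_.map_mul,
    RCLike.star_def]
  rw [Finset.sum_mul_sum]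
  rw [Finset.sum_comm]
  congr 1; funext l
  rw [Finset.sum_mul]
  congr 1; funext k
  ring

lemma trace_mul_outer (M : Matrix (Fin d) (Fin d) ℂ) (v : Fin d → ℂ) :
    (M * outer v).trace = star v ⬝ᵥ (M *ᵥ v) := by
  simp only [Matrix.trace, Matrix.diag, Matrix.mul_apply, outer, Matrix.of_apply,
    dotProduct, Matrix.mulVec, Pi.star_apply, RCLike.star_def]
  congr 1; funext i
  rw [Finset.mul_sum]
  congr 1; funext j
  ring

lemma trace_outer (v : Fin d → ℂ) : (outer v).trace = dotc v v := by
  simp only [Matrix.trace, Matrix.diag, outer, Matrix.of_apply, dotc]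
  congr 1; funext i; ring

lemma outer_mul_outer (v : Fin d → ℂ) :
    outer v * outer v = (dotc v v) • outer v := by
  ext i j
  simp only [Matrix.mul_apply, outer, Matrix.of_apply, Matrix.smul_apply, dotc,
    smul_eq_mul, Finset.sum_mul]
  exact Finset.sum_congr rfl fun k _ => by ring

lemma outer_herm (v : Fin d → ℂ) : (outer v)ᴴ = outer v := by
  ext i j
  simp only [Matrix.conjTranspose_apply, outer, Matrix.of_apply, RCLike.star_def,
    _root_.map_mul, Complex.conj_conj]
  ring

lemma outer_posSemidef (v : Fin d → ℂ) : (outer v).PosSemidef := by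
  refine posSemidef_iff_dotProduct_mulVec.2 ⟨outer_herm v, fun x => ?_⟩
  have hkey : star x ⬝ᵥ ((outer v) *ᵥ x)
      = (starRingEnd ℂ) (∑ j, (starRingEnd ℂ) (v j) * x j) * (∑ j, (starRingEnd ℂ) (v j) * x j) := by
    simp only [dotProduct, Matrix.mulVec, Pi.star_apply, outer, Matrix.of_apply,
      RCLike.star_def, map_sum, _root_.map_mul, Complex.conj_conj]
    rw [Finset.sum_mul_sum]
    congr 1; funext i
    rw [Finset.mul_sum]
    congr 1; funext j
    ring
  rw [hkey, mul_comm, Complex.mul_conj]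
  exact Complex.zero_le_real.2 (Complex.normSq_nonneg _)

lemma psd_trace_nonneg {A : Matrix (Fin d) (Fin d) ℂ} (hA : A.PosSemidef) :
    0 ≤ A.trace := by
  apply Finset.sum_nonneg
  intro i _
  have h := hA.dotProduct_mulVec_nonneg (Pi.single i 1)
  have heq : star (Pi.single i (1:ℂ)) ⬝ᵥ (A *ᵥ Pi.single i 1) = A i i := by
    rw [Matrix.mulVec_single]
    simp [dotProduct, Pi.single_apply, Pi.star_apply, apply_ite (star : ℂ → ℂ)]
  rwa [heq] at h

lemma twirl (hd2 : 2 ≤ d) (A : Matrix (Fin d) (Fin d) ℂ) :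
    ∑ a : Fin d, ∑ b : Fin d,
        (Xp d ^ ((a : Fin d) : ℕ) * Zp d ^ ((b : Fin d) : ℕ)) * A *
          (Xp d ^ ((a : Fin d) : ℕ) * Zp d ^ ((b : Fin d) : ℕ))ᴴ
      = ((d : ℂ) * A.trace) • 1 := by
  have key : ∀ a b : Fin d, ∀ j m : Fin d,
      ((Xp d ^ (a : ℕ) * Zp d ^ (b : ℕ)) * A * (Xp d ^ (a : ℕ) * Zp d ^ (b : ℕ))ᴴ) j m
        = ω d ^ ((b : ℕ) * ((j - a : Fin d) : ℕ)) * A (j - a) (m - a) *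
            (starRingEnd ℂ) (ω d ^ ((b : ℕ) * ((m - a : Fin d) : ℕ))) := by
    intro a b j m
    rw [Matrix.mul_apply]
    have hinner : ∀ l : Fin d, ((Xp d ^ (a : ℕ) * Zp d ^ (b : ℕ)) * A) j l
        = ω d ^ ((b : ℕ) * ((j - a : Fin d) : ℕ)) * A (j - a) l := by
      intro l
      rw [Matrix.mul_apply]
      rw [Finset.sum_eq_single (j - a)]
      · rw [U_apply hd2, Fin.cast_val_eq_self, if_pos (by rw [sub_add_cancel])]
      · intro k _ hk
        rw [U_apply hd2, Fin.cast_val_eq_self, if_neg, zero_mul]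
        intro h
        exact hk (by rw [h]; abel)
      · intro h; exact absurd (Finset.mem_univ _) h
    rw [Finset.sum_congr rfl fun l _ => by rw [hinner l]]
    rw [Finset.sum_eq_single (m - a)]
    · rw [Matrix.conjTranspose_apply, U_apply hd2, Fin.cast_val_eq_self,
        if_pos (by rw [sub_add_cancel])]
      rw [Complex.star_def]
    · intro l _ hl
      rw [Matrix.conjTranspose_apply, U_apply hd2, Fin.cast_val_eq_self, if_neg, star_zero,
        mul_zero]
      intro h
      exact hl (by rw [h]; abel)
    · intro h; exact absurd (Finset.mem_univ _) h
  ext j m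
  rw [Matrix.sum_apply]
  rw [Finset.sum_congr rfl fun a _ => by
    rw [Matrix.sum_apply, Finset.sum_congr rfl fun b _ => key a b j m]]
  have hb : ∀ a : Fin d,
      ∑ b : Fin d, ω d ^ ((b : ℕ) * ((j - a : Fin d) : ℕ)) * A (j - a) (m - a) *
          (starRingEnd ℂ) (ω d ^ ((b : ℕ) * ((m - a : Fin d) : ℕ)))
        = (if j = m then (d : ℂ) else 0) * A (j - a) (m - a) := by
    intro a
    have : ∀ b : Fin d, ω d ^ ((b : ℕ) * ((j - a : Fin d) : ℕ)) * A (j - a) (m - a) *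
          (starRingEnd ℂ) (ω d ^ ((b : ℕ) * ((m - a : Fin d) : ℕ)))
        = (ω d ^ ((b : ℕ) * ((j - a : Fin d) : ℕ)) *
            (starRingEnd ℂ) (ω d ^ ((b : ℕ) * ((m - a : Fin d) : ℕ)))) * A (j - a) (m - a) := by
      intro b; ring
    rw [Finset.sum_congr rfl fun b _ => this b, ← Finset.sum_mul, roots_sum hd2]
    congr 1
    simp [sub_left_inj]
  rw [Finset.sum_congr rfl fun a _ => hb a]
  by_cases hjm : j = m
  · subst hjm
    simp only [if_pos rfl]
    rw [← Finset.mul_sum]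
    have : ∑ a : Fin d, A (j - a) (j - a) = A.trace := by
      rw [Matrix.trace]
      exact Fintype.sum_equiv (Equiv.subLeft j) _ _ fun a => rfl
    rw [this]
    simp
  · simp [hjm, Matrix.one_apply_ne hjm]

end Stmt7Aux

open Stmt7Aux in
theorem stmt_7 (d : ℕ) (hd : Nat.Prime d) (Ψ : Fin d → ℂ) (hΨ : dotc Ψ Ψ = 1) :
    IsGreatest {x : ℝ | ∃ M : Fin d × Fin d → Matrix (Fin d) (Fin d) ℂ,
        (∀ y, (M y).PosSemidef) ∧ (∑ y, M y = 1) ∧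
        x = ((d : ℝ) ^ 2)⁻¹ * ∑ y₀ : Fin d, ∑ y₁ : Fin d,
          ((M (y₀, y₁) * outer (((Xp d ^ (y₀ : ℕ)) * (Zp d ^ (y₁ : ℕ))).mulVec Ψ)).trace).re}
      ((d : ℝ)⁻¹) := by
  have hd2 : 2 ≤ d := hd.two_le
  haveI : NeZero d := ⟨by omega⟩
  have hdR : (d : ℝ) ≠ 0 := Nat.cast_ne_zero.2 (by omega)
  have hdC : (d : ℂ) ≠ 0 := Nat.cast_ne_zero.2 (by omega)
  have hψ : ∀ y₀ y₁ : Fin d,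
      dotc (((Xp d ^ (y₀ : ℕ)) * (Zp d ^ (y₁ : ℕ))).mulVec Ψ)
        (((Xp d ^ (y₀ : ℕ)) * (Zp d ^ (y₁ : ℕ))).mulVec Ψ) = 1 := fun y₀ y₁ =>
    (dotc_mulVec_unitary (U_unitary hd2 _ _) Ψ).trans hΨ
  have hPP : ∀ y₀ y₁ : Fin d,
      outer (((Xp d ^ (y₀ : ℕ)) * (Zp d ^ (y₁ : ℕ))).mulVec Ψ) *
        outer (((Xp d ^ (y₀ : ℕ)) * (Zp d ^ (y₁ : ℕ))).mulVec Ψ)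
      = outer (((Xp d ^ (y₀ : ℕ)) * (Zp d ^ (y₁ : ℕ))).mulVec Ψ) := fun y₀ y₁ => by
    rw [outer_mul_outer, hψ y₀ y₁, one_smul]
  constructor
  · -- membership
    refine ⟨fun y => ((d : ℂ))⁻¹ •
      outer (((Xp d ^ (y.1 : ℕ)) * (Zp d ^ (y.2 : ℕ))).mulVec Ψ), ?_, ?_, ?_⟩
    · intro y
      refine posSemidef_iff_dotProduct_mulVec.2 ⟨?_, ?_⟩
      · rw [Matrix.IsHermitian, Matrix.conjTranspose_smul, outer_herm]
        congr 1
        simp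
      · intro x
        rw [Matrix.smul_mulVec, dotProduct_smul]
        have h0 := (outer_posSemidef (((Xp d ^ (y.1 : ℕ)) * (Zp d ^ (y.2 : ℕ))).mulVec Ψ)).dotProduct_mulVec_nonneg x
        have hc : (0 : ℂ) ≤ (d : ℂ)⁻¹ := by
          rw [show ((d : ℂ))⁻¹ = (((d : ℝ)⁻¹ : ℝ) : ℂ) by push_cast; ring]
          exact Complex.zero_le_real.2 (by positivity)
        rw [smul_eq_mul]
        exact mul_nonneg hc h0
    · rw [Fintype.sum_prod_type]
      have h2 : (∑ a : Fin d, ∑ b : Fin d, ((d : ℂ))⁻¹ •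
            outer (((Xp d ^ ((a, b).1 : ℕ)) * (Zp d ^ ((a, b).2 : ℕ))).mulVec Ψ))
          = (d : ℂ)⁻¹ • ∑ a : Fin d, ∑ b : Fin d,
              (Xp d ^ ((a : Fin d) : ℕ) * Zp d ^ ((b : Fin d) : ℕ)) * outer Ψ *
                (Xp d ^ ((a : Fin d) : ℕ) * Zp d ^ ((b : Fin d) : ℕ))ᴴ := by
        rw [Finset.smul_sum]
        refine Finset.sum_congr rfl fun a _ => ?_
        rw [Finset.smul_sum]
        refine Finset.sum_congr rfl fun b _ => ?_
        rw [outer_conj_eq]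
      rw [h2, twirl hd2, trace_outer, hΨ, mul_one, smul_smul, inv_mul_cancel₀ hdC, one_smul]
    · have hval : ∀ y₀ y₁ : Fin d,
          (((((d : ℂ))⁻¹ • outer (((Xp d ^ (y₀ : ℕ)) * (Zp d ^ (y₁ : ℕ))).mulVec Ψ)) *
              outer (((Xp d ^ (y₀ : ℕ)) * (Zp d ^ (y₁ : ℕ))).mulVec Ψ)).trace).re
            = (d : ℝ)⁻¹ := by
        intro y₀ y₁
        rw [Matrix.smul_mul, Matrix.trace_smul, hPP y₀ y₁, trace_outer, hψ y₀ y₁,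
          smul_eq_mul, mul_one, ← Complex.ofReal_natCast, ← Complex.ofReal_inv,
          Complex.ofReal_re]
      rw [Finset.sum_congr rfl fun y₀ _ => Finset.sum_congr rfl fun y₁ _ => hval y₀ y₁]
      simp only [Finset.sum_const, Finset.card_univ, Fintype.card_fin, nsmul_eq_mul]
      field_simp
  · -- upper bound
    rintro x ⟨M, hpsd, hsum, rfl⟩
    have key : ∀ y₀ y₁ : Fin d,
        ((M (y₀, y₁) * outer (((Xp d ^ (y₀ : ℕ)) * (Zp d ^ (y₁ : ℕ))).mulVec Ψ)).trace).re
          ≤ ((M (y₀, y₁)).trace).re := by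
      intro y₀ y₁
      set P := outer (((Xp d ^ (y₀ : ℕ)) * (Zp d ^ (y₁ : ℕ))).mulVec Ψ) with hPdef
      have hQpsd : (1 - P).PosSemidef := by
        have hQH : (1 - P)ᴴ = 1 - P := by
          rw [Matrix.conjTranspose_sub, Matrix.conjTranspose_one, hPdef, outer_herm]
        have hQQ : (1 - P)ᴴ * (1 - P) = 1 - P := by
          rw [hQH]
          have hexp : (1 - P) * (1 - P) = 1 - P - (P - P * P) := by noncomm_ring
          rw [hexp, hPP y₀ y₁, sub_self, sub_zero]
        rw [← hQQ]
        exact Matrix.posSemidef_conjTranspose_mul_self _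
      open scoped MatrixOrder in
      obtain ⟨B, hB⟩ := CStarAlgebra.nonneg_iff_eq_star_mul_self.mp (hpsd (y₀, y₁)).nonneg
      have h0 : 0 ≤ (M (y₀, y₁) * (1 - P)).trace := by
        rw [hB, Matrix.mul_assoc, Matrix.trace_mul_comm]
        exact psd_trace_nonneg (hQpsd.mul_mul_conjTranspose_same B)
      have h1 : (M (y₀, y₁) * (1 - P)).trace
          = (M (y₀, y₁)).trace - (M (y₀, y₁) * P).trace := by
        rw [Matrix.mul_sub, Matrix.mul_one, Matrix.trace_sub]
      rw [h1] at h0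
      have h2 := (Complex.le_def.1 h0).1
      simp only [Complex.zero_re, Complex.sub_re] at h2
      linarith
    have hsum' : ∑ y₀ : Fin d, ∑ y₁ : Fin d,
        ((M (y₀, y₁) * outer (((Xp d ^ (y₀ : ℕ)) * (Zp d ^ (y₁ : ℕ))).mulVec Ψ)).trace).re
          ≤ (d : ℝ) := by
      have hle : ∑ y₀ : Fin d, ∑ y₁ : Fin d,
          ((M (y₀, y₁) * outer (((Xp d ^ (y₀ : ℕ)) * (Zp d ^ (y₁ : ℕ))).mulVec Ψ)).trace).re
            ≤ ∑ y₀ : Fin d, ∑ y₁ : Fin d, ((M (y₀, y₁)).trace).re :=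
        Finset.sum_le_sum fun y₀ _ => Finset.sum_le_sum fun y₁ _ => key y₀ y₁
      have heq : ∑ y₀ : Fin d, ∑ y₁ : Fin d, ((M (y₀, y₁)).trace).re = (d : ℝ) := by
        have : ∑ y₀ : Fin d, ∑ y₁ : Fin d, ((M (y₀, y₁)).trace).re
            = ((∑ y : Fin d × Fin d, M y).trace).re := by
          rw [Matrix.trace_sum, Complex.re_sum, Fintype.sum_prod_type]
        rw [this, hsum, Matrix.trace_one]
        simp
      linarith
    have hcoef : (0 : ℝ) ≤ ((d : ℝ) ^ 2)⁻¹ := by positivity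
    calc ((d : ℝ) ^ 2)⁻¹ * ∑ y₀ : Fin d, ∑ y₁ : Fin d,
          ((M (y₀, y₁) * outer (((Xp d ^ (y₀ : ℕ)) * (Zp d ^ (y₁ : ℕ))).mulVec Ψ)).trace).re
        ≤ ((d : ℝ) ^ 2)⁻¹ * (d : ℝ) := mul_le_mul_of_nonneg_left hsum' hcoef
      _ = (d : ℝ)⁻¹ := by
          field_simp
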